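/- arXiv:2306.13753 — 2 statements merged into one kernel-verified Lean document; each statement's English description precedes it below -/
import Mathlib

section
/- Let A be a baseline attribution method on real analytic functions on [a,b] satisfying completeness, dummy, linearity, and symmetric monotonicity. Then A agrees with the Integrated Gradients method on all monomials: for every x̄, x' ∈ [a,b] and every multi-index m ∈ ℕ₀ⁿ, A(x̄, x', [x − x']^m) = IG(x̄, x', [x − x']^m), whose i-th component equals (m_i/‖m‖₁)·[x̄ − x']^m when m ≠ 0 and 0 when m = 0. -/
open MeasureTheory

/-- A baseline attribution method on `ℝⁿ`. -/
abbrev BAM (n : ℕ) : Type :=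
  (Fin n → ℝ) → (Fin n → ℝ) → ((Fin n → ℝ) → ℝ) → (Fin n → ℝ)

/-- The partial derivative of `F : ℝⁿ → ℝ` in the `i`-th coordinate at `x`. -/
noncomputable def pderiv' {n : ℕ} (F : (Fin n → ℝ) → ℝ) (i : Fin n) (x : Fin n → ℝ) : ℝ :=
  deriv (fun t => F (Function.update x i t)) (x i)

/-- The Integrated Gradients attribution. -/
noncomputable def IG {n : ℕ} (xbar x' : Fin n → ℝ) (F : (Fin n → ℝ) → ℝ) : Fin n → ℝ :=
  fun i => (xbar i - x' i) * ∫ t in (0:ℝ)..1, pderiv' F i (x' + t • (xbar - x'))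

/-- The monomial `[x − x']^m = ∏_k (x_k − x'_k)^{m_k}`. -/
def monomial {n : ℕ} (x' : Fin n → ℝ) (m : Fin n → ℕ) (x : Fin n → ℝ) : ℝ :=
  ∏ k, (x k - x' k) ^ m k

/-- `F` does not vary in its `i`-th input. -/
def DoesNotVary {n : ℕ} (F : (Fin n → ℝ) → ℝ) (i : Fin n) : Prop :=
  ∀ x : Fin n → ℝ, ∀ t : ℝ, F (Function.update x i t) = F x

/-- Completeness on real analytic functions. -/
def Completeness {n : ℕ} (a b : Fin n → ℝ) (A : BAM n) : Prop :=
  ∀ xbar ∈ Set.uIcc a b, ∀ x' ∈ Set.uIcc a b, ∀ F : (Fin n → ℝ) → ℝ,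
    AnalyticOnNhd ℝ F (Set.uIcc a b) → ∑ i, A xbar x' F i = F xbar - F x'

/-- Dummy on real analytic functions. -/
def Dummy {n : ℕ} (a b : Fin n → ℝ) (A : BAM n) : Prop :=
  ∀ xbar ∈ Set.uIcc a b, ∀ x' ∈ Set.uIcc a b, ∀ F : (Fin n → ℝ) → ℝ,
    AnalyticOnNhd ℝ F (Set.uIcc a b) → ∀ i, DoesNotVary F i → A xbar x' F i = 0

/-- Linearity on real analytic functions. -/
def Linearity {n : ℕ} (a b : Fin n → ℝ) (A : BAM n) : Prop :=
  ∀ xbar ∈ Set.uIcc a b, ∀ x' ∈ Set.uIcc a b, ∀ F G : (Fin n → ℝ) → ℝ,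
    AnalyticOnNhd ℝ F (Set.uIcc a b) → AnalyticOnNhd ℝ G (Set.uIcc a b) → ∀ α β : ℝ,
      A xbar x' (fun x => α * F x + β * G x) = α • A xbar x' F + β • A xbar x' G

/-- Symmetric monotonicity on real analytic functions. -/
def SymmetricMonotonicity {n : ℕ} (a b : Fin n → ℝ) (A : BAM n) : Prop :=
  ∀ xbar ∈ Set.uIcc a b, ∀ x' ∈ Set.uIcc a b, ∀ F G : (Fin n → ℝ) → ℝ,
    AnalyticOnNhd ℝ F (Set.uIcc a b) → AnalyticOnNhd ℝ G (Set.uIcc a b) →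
    (∀ i j : Fin n, xbar i ≠ x' i → xbar j ≠ x' j →
      (∀ x ∈ Set.uIcc xbar x', pderiv' F i x ≤ pderiv' G j x) →
      A xbar x' F i / (xbar i - x' i) ≤ A xbar x' G j / (xbar j - x' j)) ∧
    (∀ i : Fin n, xbar i = x' i → A xbar x' F i = 0)


section Aux

variable {n : ℕ}

lemma monomial_analytic (x' : Fin n → ℝ) (m : Fin n → ℕ) (s : Set (Fin n → ℝ)) :
    AnalyticOnNhd ℝ (monomial x' m) s := by
  unfold monomial
  apply Finset.analyticOnNhd_fun_prod
  intro k _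
  exact (((ContinuousLinearMap.proj k : (Fin n → ℝ) →L[ℝ] ℝ).analyticOnNhd s).sub
    analyticOnNhd_const).pow _

lemma const_mul_monomial_analytic (c : ℝ) (x' : Fin n → ℝ) (m : Fin n → ℕ)
    (s : Set (Fin n → ℝ)) :
    AnalyticOnNhd ℝ (fun y => c * monomial x' m y) s :=
  analyticOnNhd_const.mul (monomial_analytic x' m s)

lemma monomial_update (x' : Fin n → ℝ) (m : Fin n → ℕ) (x : Fin n → ℝ) (i : Fin n) (t : ℝ) :
    monomial x' m (Function.update x i t)
      = (t - x' i) ^ m i * ∏ k ∈ Finset.univ.erase i, (x k - x' k) ^ m k := by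
  unfold monomial
  rw [← Finset.mul_prod_erase Finset.univ _ (Finset.mem_univ i)]
  simp only [Function.update_self]
  congr 1
  refine Finset.prod_congr rfl fun k hk => ?_
  rw [Function.update_of_ne (Finset.ne_of_mem_erase hk)]

lemma monomial_hasDerivAt (x' : Fin n → ℝ) (m : Fin n → ℕ) (x : Fin n → ℝ) (i : Fin n) :
    HasDerivAt (fun t => monomial x' m (Function.update x i t))
      ((m i : ℝ) * (x i - x' i) ^ (m i - 1) * ∏ k ∈ Finset.univ.erase i, (x k - x' k) ^ m k)
      (x i) := by
  rw [show (fun t => monomial x' m (Function.update x i t))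
    = fun t => (t - x' i) ^ m i * ∏ k ∈ Finset.univ.erase i, (x k - x' k) ^ m k from
      funext fun t => monomial_update x' m x i t]
  have h1 : HasDerivAt (fun t : ℝ => (t - x' i) ^ m i)
      ((m i : ℝ) * (x i - x' i) ^ (m i - 1) * 1) (x i) :=
    ((hasDerivAt_id (x i)).sub_const (x' i)).pow (m i)
  simpa [mul_assoc] using h1.mul_const _

lemma pderiv_monomial (x' : Fin n → ℝ) (m : Fin n → ℕ) (i : Fin n) (x : Fin n → ℝ) :
    pderiv' (monomial x' m) i x
      = (m i : ℝ) * (x i - x' i) ^ (m i - 1) * ∏ k ∈ Finset.univ.erase i, (x k - x' k) ^ m k :=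
  (monomial_hasDerivAt x' m x i).deriv

lemma pderiv_const_mul_monomial (c : ℝ) (x' : Fin n → ℝ) (m : Fin n → ℕ) (i : Fin n)
    (x : Fin n → ℝ) :
    pderiv' (fun y => c * monomial x' m y) i x
      = c * ((m i : ℝ) * (x i - x' i) ^ (m i - 1)
          * ∏ k ∈ Finset.univ.erase i, (x k - x' k) ^ m k) :=
  ((monomial_hasDerivAt x' m x i).const_mul c).deriv

lemma dnv_of_exp_zero (x' : Fin n → ℝ) (m : Fin n → ℕ) (i : Fin n) (h0 : m i = 0) :
    DoesNotVary (monomial x' m) i := by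
  intro x t
  rw [monomial_update, h0, pow_zero, one_mul]
  conv_rhs => rw [← Function.update_eq_self i x, monomial_update, h0, pow_zero, one_mul]

lemma mem_box_coord {xbar x' x : Fin n → ℝ} (hx : x ∈ Set.uIcc xbar x') {k : Fin n}
    (heq : xbar k = x' k) : x k = x' k := by
  rw [Set.uIcc] at hx
  have h1 := hx.1 k
  have h2 := hx.2 k
  simp only [Pi.inf_apply, Pi.sup_apply, heq, min_self, max_self] at h1 h2
  exact le_antisymm h2 h1

end Aux

section MainArg

variable {n : ℕ} {a b : Fin n → ℝ} {A : BAM n} {xbar x' : Fin n → ℝ}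

/-- Attribution of a dummy coordinate of a monomial vanishes. -/
lemma A_exp_zero (hdummy : Dummy a b A) (hxbar : xbar ∈ Set.uIcc a b) (hx' : x' ∈ Set.uIcc a b)
    (m : Fin n → ℕ) (i : Fin n) (h0 : m i = 0) :
    A xbar x' (monomial x' m) i = 0 :=
  hdummy xbar hxbar x' hx' _ (monomial_analytic x' m _) i (dnv_of_exp_zero x' m i h0)

/-- The key exchange relation coming from symmetric monotonicity and linearity. -/
lemma A_relation (hlin : Linearity a b A) (hsm : SymmetricMonotonicity a b A)
    (hxbar : xbar ∈ Set.uIcc a b) (hx' : x' ∈ Set.uIcc a b)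
    (m : Fin n → ℕ) (i j : Fin n) (hij : j ≠ i) (hmi : 1 ≤ m i)
    (hdi : xbar i ≠ x' i) (hdj : xbar j ≠ x' j) :
    A xbar x' (monomial x' m) i / (xbar i - x' i)
      = ((m i : ℝ) / ((m j : ℝ) + 1))
          * A xbar x' (monomial x' (Function.update (Function.update m i (m i - 1)) j (m j + 1))) j
          / (xbar j - x' j) := by
  set m' : Fin n → ℕ := Function.update (Function.update m i (m i - 1)) j (m j + 1) with hm'def
  set c : ℝ := (m i : ℝ) / ((m j : ℝ) + 1) with hcdef
  have hm'j : m' j = m j + 1 := Function.update_self _ _ _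
  have hm'i : m' i = m i - 1 := by
    rw [hm'def, Function.update_of_ne hij.symm, Function.update_self]
  have hm'k : ∀ k, k ≠ i → k ≠ j → m' k = m k := fun k hki hkj => by
    rw [hm'def, Function.update_of_ne hkj, Function.update_of_ne hki]
  have hc : c * ((m j : ℝ) + 1) = (m i : ℝ) := by
    rw [hcdef]; field_simp
  -- pointwise equality of the relevant partial derivatives
  have hderiv : ∀ x : Fin n → ℝ,
      pderiv' (monomial x' m) i x = pderiv' (fun y => c * monomial x' m' y) j x := by
    intro x
    rw [pderiv_monomial, pderiv_const_mul_monomial]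
    have hiej : i ∈ Finset.univ.erase j := Finset.mem_erase.2 ⟨hij.symm, Finset.mem_univ i⟩
    have hjei : j ∈ Finset.univ.erase i := Finset.mem_erase.2 ⟨hij, Finset.mem_univ j⟩
    have hprodj : ∏ k ∈ Finset.univ.erase j, (x k - x' k) ^ m' k
        = (x i - x' i) ^ (m i - 1)
            * ∏ k ∈ (Finset.univ.erase j).erase i, (x k - x' k) ^ m k := by
      rw [← Finset.mul_prod_erase _ _ hiej, hm'i]
      congr 1
      refine Finset.prod_congr rfl fun k hk => ?_
      have hk1 := Finset.ne_of_mem_erase hk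
      have hk2 := Finset.ne_of_mem_erase (Finset.mem_of_mem_erase hk)
      rw [hm'k k hk1 hk2]
    have hprodi : ∏ k ∈ Finset.univ.erase i, (x k - x' k) ^ m k
        = (x j - x' j) ^ m j
            * ∏ k ∈ (Finset.univ.erase j).erase i, (x k - x' k) ^ m k := by
      rw [Finset.erase_right_comm, ← Finset.mul_prod_erase _ _ hjei]
    rw [hprodi, hprodj, hm'j]
    have hc' : ((m j + 1 : ℕ) : ℝ) = (m j : ℝ) + 1 := by push_cast; ring
    rw [Nat.add_sub_cancel, hc']
    rw [hcdef]
    have hne : (m j : ℝ) + 1 ≠ 0 := by positivity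
    field_simp
  -- symmetric monotonicity in both directions
  have hanaF := monomial_analytic x' m (Set.uIcc a b)
  have hanaG := const_mul_monomial_analytic c x' m' (Set.uIcc a b)
  have h1 := (hsm xbar hxbar x' hx' _ _ hanaF hanaG).1 i j hdi hdj
    (fun x _ => le_of_eq (hderiv x))
  have h2 := (hsm xbar hxbar x' hx' _ _ hanaG hanaF).1 j i hdj hdi
    (fun x _ => le_of_eq (hderiv x).symm)
  have heq : A xbar x' (monomial x' m) i / (xbar i - x' i)
      = A xbar x' (fun y => c * monomial x' m' y) j / (xbar j - x' j) :=
    le_antisymm h1 h2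
  -- linearity to pull out the scalar
  have hlin' := hlin xbar hxbar x' hx' (monomial x' m') (monomial x' m')
    (monomial_analytic x' m' _) (monomial_analytic x' m' _) c 0
  have hfun : (fun x => c * monomial x' m' x + 0 * monomial x' m' x)
      = fun y => c * monomial x' m' y := by funext y; ring
  rw [hfun] at hlin'
  have hval : A xbar x' (fun y => c * monomial x' m' y) j
      = c * A xbar x' (monomial x' m') j := by
    rw [hlin']; simp
  rw [heq, hval, mul_div_assoc]

/-- Attribution vanishes if the partial derivative vanishes on the box. -/
lemma A_zero_pderiv (hdummy : Dummy a b A) (hsm : SymmetricMonotonicity a b A)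
    (hxbar : xbar ∈ Set.uIcc a b) (hx' : x' ∈ Set.uIcc a b)
    (m : Fin n → ℕ) (i : Fin n) (hdi : xbar i ≠ x' i)
    (hz : ∀ x ∈ Set.uIcc xbar x', pderiv' (monomial x' m) i x = 0) :
    A xbar x' (monomial x' m) i = 0 := by
  have hanaF := monomial_analytic x' m (Set.uIcc a b)
  have hanaZ : AnalyticOnNhd ℝ (fun _ : Fin n → ℝ => (0 : ℝ)) (Set.uIcc a b) :=
    analyticOnNhd_const
  have hpz : ∀ x : Fin n → ℝ, pderiv' (fun _ : Fin n → ℝ => (0 : ℝ)) i x = 0 := by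
    intro x; simp [pderiv']
  have hAz : A xbar x' (fun _ : Fin n → ℝ => (0 : ℝ)) i = 0 :=
    hdummy xbar hxbar x' hx' _ hanaZ i (fun x t => rfl)
  have h1 := (hsm xbar hxbar x' hx' _ _ hanaF hanaZ).1 i i hdi hdi
    (fun x hx => by rw [hz x hx, hpz x])
  have h2 := (hsm xbar hxbar x' hx' _ _ hanaZ hanaF).1 i i hdi hdi
    (fun x hx => by rw [hz x hx, hpz x])
  have heq := le_antisymm h1 h2
  rw [hAz, zero_div, div_eq_zero_iff] at heq
  rcases heq with h | h
  · exact h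
  · exact absurd (sub_eq_zero.1 h) hdi

/-- Main positive case, by strong induction on `‖m‖₁ - m i`. -/
lemma A_main_pos (hcomp : Completeness a b A) (hdummy : Dummy a b A) (hlin : Linearity a b A)
    (hsm : SymmetricMonotonicity a b A)
    (hxbar : xbar ∈ Set.uIcc a b) (hx' : x' ∈ Set.uIcc a b) :
    ∀ r : ℕ, ∀ m : Fin n → ℕ, ∀ i : Fin n, (∑ k, m k) - m i = r → 1 ≤ m i →
      (∀ k, 1 ≤ m k → xbar k ≠ x' k) →
      A xbar x' (monomial x' m) i
        = ((m i : ℝ) / ∑ k, (m k : ℝ)) * ∏ k, (xbar k - x' k) ^ m k := by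
  intro r
  induction r using Nat.strong_induction_on with
  | _ r ih =>
  intro m i hr hmi hgood
  have hScast : (∑ k, (m k : ℝ)) = ((∑ k, m k : ℕ) : ℝ) := by push_cast; rfl
  have hS1 : 1 ≤ ∑ k, m k :=
    hmi.trans (Finset.single_le_sum (f := m) (fun _ _ => Nat.zero_le _) (Finset.mem_univ i))
  have hSne : (∑ k, (m k : ℝ)) ≠ 0 := by
    rw [hScast]; exact Nat.cast_ne_zero.2 (by omega)
  have hdi : xbar i ≠ x' i := hgood i hmi
  -- attribution of every other coordinate, via the exchange relation and the IH
  have hk : ∀ k ∈ Finset.univ.erase i, A xbar x' (monomial x' m) k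
      = ((m k : ℝ) / ∑ l, (m l : ℝ)) * ∏ l, (xbar l - x' l) ^ m l := by
    intro k hkmem
    have hki : k ≠ i := Finset.ne_of_mem_erase hkmem
    by_cases hmk : m k = 0
    · rw [A_exp_zero hdummy hxbar hx' m k hmk, hmk]
      simp
    · have hmk1 : 1 ≤ m k := by omega
      have hdk : xbar k ≠ x' k := hgood k hmk1
      set m' : Fin n → ℕ := Function.update (Function.update m k (m k - 1)) i (m i + 1)
        with hm'def
      have hm'i : m' i = m i + 1 := Function.update_self _ _ _
      have hm'k : m' k = m k - 1 := by
        rw [hm'def, Function.update_of_ne hki, Function.update_self]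
      have hm'l : ∀ l, l ≠ i → l ≠ k → m' l = m l := fun l hli hlk => by
        rw [hm'def, Function.update_of_ne hli, Function.update_of_ne hlk]
      have hkmem' : k ∈ Finset.univ.erase i := hkmem
      have himem : i ∈ Finset.univ.erase k := Finset.mem_erase.2 ⟨hki.symm, Finset.mem_univ i⟩
      -- sums agree
      have hsplit : ∑ l, m l = m i + (m k + ∑ l ∈ (Finset.univ.erase i).erase k, m l) := by
        rw [← Finset.add_sum_erase _ _ (Finset.mem_univ i), ← Finset.add_sum_erase _ _ hkmem]
      have hsplit' : ∑ l, m' l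
          = m' i + (m' k + ∑ l ∈ (Finset.univ.erase i).erase k, m' l) := by
        rw [← Finset.add_sum_erase _ _ (Finset.mem_univ i),
          ← Finset.add_sum_erase _ _ hkmem]
      have hQ : ∑ l ∈ (Finset.univ.erase i).erase k, m' l
          = ∑ l ∈ (Finset.univ.erase i).erase k, m l := by
        refine Finset.sum_congr rfl fun l hl => ?_
        exact hm'l l (Finset.ne_of_mem_erase (Finset.mem_of_mem_erase hl))
          (Finset.ne_of_mem_erase hl)
      have hsum' : ∑ l, m' l = ∑ l, m l := by
        rw [hsplit, hsplit', hQ, hm'i, hm'k]; omega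
      -- the exchange relation
      have hrel := A_relation hlin hsm hxbar hx' m k i hki.symm hmk1 hdk hdi
      rw [← hm'def] at hrel
      -- the induction hypothesis applies to m'
      have hik : m i + m k ≤ ∑ l, m l := by omega
      have hr' : (∑ l, m' l) - m' i < r := by rw [hsum', hm'i]; omega
      have hgood' : ∀ l, 1 ≤ m' l → xbar l ≠ x' l := by
        intro l hl
        by_cases hli : l = i
        · subst hli; exact hdi
        · by_cases hlk : l = k
          · subst hlk; exact hdk
          · rw [hm'l l hli hlk] at hl; exact hgood l hl
      have hIH := ih _ hr' m' i rfl (by rw [hm'i]; omega) hgood'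
      -- product identity between the two monomials
      have hPsplit : ∏ l, (xbar l - x' l) ^ m l
          = (xbar i - x' i) ^ m i * ((xbar k - x' k) ^ m k
              * ∏ l ∈ (Finset.univ.erase i).erase k, (xbar l - x' l) ^ m l) := by
        rw [← Finset.mul_prod_erase _ _ (Finset.mem_univ i), ← Finset.mul_prod_erase _ _ hkmem]
      have hPsplit' : ∏ l, (xbar l - x' l) ^ m' l
          = (xbar i - x' i) ^ (m i + 1) * ((xbar k - x' k) ^ (m k - 1)
              * ∏ l ∈ (Finset.univ.erase i).erase k, (xbar l - x' l) ^ m l) := by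
        rw [← Finset.mul_prod_erase _ _ (Finset.mem_univ i), ← Finset.mul_prod_erase _ _ hkmem,
          hm'i, hm'k]
        congr 2
        refine Finset.prod_congr rfl fun l hl => ?_
        rw [hm'l l (Finset.ne_of_mem_erase (Finset.mem_of_mem_erase hl))
          (Finset.ne_of_mem_erase hl)]
      have hP : (∏ l, (xbar l - x' l) ^ m' l) * (xbar k - x' k)
          = (∏ l, (xbar l - x' l) ^ m l) * (xbar i - x' i) := by
        rw [hPsplit, hPsplit', pow_succ]
        have hmkpow : (xbar k - x' k) ^ m k
            = (xbar k - x' k) ^ (m k - 1) * (xbar k - x' k) := by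
          rw [← pow_succ]; congr 1; omega
        rw [hmkpow]; ring
      -- put everything together
      have hsumcast : (∑ l, (m' l : ℝ)) = ∑ l, (m l : ℝ) := by
        have : ((∑ l, m' l : ℕ) : ℝ) = ((∑ l, m l : ℕ) : ℝ) := by rw [hsum']
        push_cast at this; exact this
      rw [hIH, hsumcast] at hrel
      have hm'icast : ((m' i : ℕ) : ℝ) = (m i : ℝ) + 1 := by rw [hm'i]; push_cast; ring
      rw [hm'icast] at hrel
      have hdk' : xbar k - x' k ≠ 0 := sub_ne_zero_of_ne hdk
      have hdi' : xbar i - x' i ≠ 0 := sub_ne_zero_of_ne hdi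
      have hmi1ne : (m i : ℝ) + 1 ≠ 0 := by positivity
      rw [div_eq_iff hdk'] at hrel
      have e1 : ((m k : ℝ)) / ((m i : ℝ) + 1)
          * ((((m i : ℝ) + 1) / ∑ l : Fin n, (m l : ℝ)) * ∏ l : Fin n, (xbar l - x' l) ^ m' l)
          = (m k : ℝ) / (∑ l : Fin n, (m l : ℝ)) * ∏ l : Fin n, (xbar l - x' l) ^ m' l := by
        field_simp
      rw [e1] at hrel
      rw [hrel, div_mul_eq_mul_div, mul_assoc, hP, ← mul_assoc, mul_div_assoc,
        div_self hdi', mul_one]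
  -- completeness determines the remaining coordinate
  have hFx' : monomial x' m x' = 0 := by
    refine Finset.prod_eq_zero (Finset.mem_univ i) ?_
    rw [sub_self]; exact zero_pow (by omega)
  have hcomp' := hcomp xbar hxbar x' hx' (monomial x' m) (monomial_analytic x' m _)
  rw [hFx', sub_zero] at hcomp'
  rw [← Finset.add_sum_erase _ _ (Finset.mem_univ i), Finset.sum_congr rfl hk] at hcomp'
  have hsum_erase : ∑ k ∈ Finset.univ.erase i,
      (((m k : ℝ) / ∑ l, (m l : ℝ)) * ∏ l, (xbar l - x' l) ^ m l)
      = (((∑ l, (m l : ℝ)) - (m i : ℝ)) / ∑ l, (m l : ℝ)) * ∏ l, (xbar l - x' l) ^ m l := by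
    rw [← Finset.sum_mul, ← Finset.sum_div]
    congr 2
    rw [eq_sub_iff_add_eq, add_comm]
    exact Finset.add_sum_erase _ (fun l => ((m l : ℕ) : ℝ)) (Finset.mem_univ i)
  rw [hsum_erase] at hcomp'
  have hgoal : A xbar x' (monomial x' m) i
      = monomial x' m xbar
        - (((∑ l, (m l : ℝ)) - (m i : ℝ)) / ∑ l, (m l : ℝ)) * ∏ l, (xbar l - x' l) ^ m l := by
    linarith [hcomp']
  rw [hgoal]
  show (∏ l, (xbar l - x' l) ^ m l) - _ = _
  field_simp
  ring

end MainArg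

section IGcomp

variable {n : ℕ}

lemma IG_monomial_zero (xbar x' : Fin n → ℝ) (m : Fin n → ℕ) (i : Fin n) (h0 : m i = 0) :
    IG xbar x' (monomial x' m) i = 0 := by
  have hz : ∀ t : ℝ, pderiv' (monomial x' m) i (x' + t • (xbar - x')) = 0 := by
    intro t
    rw [pderiv_monomial, h0]
    simp
  unfold IG
  simp only [hz, intervalIntegral.integral_zero, mul_zero]

lemma IG_monomial_pos (xbar x' : Fin n → ℝ) (m : Fin n → ℕ) (i : Fin n) (hmi : 1 ≤ m i) :
    IG xbar x' (monomial x' m) i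
      = ((m i : ℝ) / ∑ k, (m k : ℝ)) * ∏ k, (xbar k - x' k) ^ m k := by
  have hS1 : 1 ≤ ∑ k, m k :=
    hmi.trans (Finset.single_le_sum (f := m) (fun _ _ => Nat.zero_le _) (Finset.mem_univ i))
  have hpt : ∀ t : ℝ, ∀ l, (x' + t • (xbar - x')) l - x' l = t * (xbar l - x' l) := by
    intro t l
    show x' l + t * (xbar l - x' l) - x' l = t * (xbar l - x' l)
    ring
  have hint : ∀ t : ℝ, pderiv' (monomial x' m) i (x' + t • (xbar - x'))
      = ((m i : ℝ) * (xbar i - x' i) ^ (m i - 1)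
          * ∏ k ∈ Finset.univ.erase i, (xbar k - x' k) ^ m k) * t ^ ((∑ k, m k) - 1) := by
    intro t
    rw [pderiv_monomial]
    simp only [hpt]
    rw [mul_pow t (xbar i - x' i) (m i - 1)]
    have hprod : ∏ k ∈ Finset.univ.erase i, (t * (xbar k - x' k)) ^ m k
        = t ^ (∑ k ∈ Finset.univ.erase i, m k)
            * ∏ k ∈ Finset.univ.erase i, (xbar k - x' k) ^ m k := by
      rw [← Finset.prod_pow_eq_pow_sum, ← Finset.prod_mul_distrib]
      exact Finset.prod_congr rfl fun k _ => mul_pow _ _ _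
    rw [hprod]
    have hexp : (m i - 1) + (∑ k ∈ Finset.univ.erase i, m k) = (∑ k, m k) - 1 := by
      have := Finset.add_sum_erase Finset.univ m (Finset.mem_univ i)
      omega
    rw [← hexp, pow_add]
    ring
  unfold IG
  simp only [hint]
  rw [intervalIntegral.integral_const_mul, integral_pow]
  have hSm : (∑ k, m k) - 1 + 1 = ∑ k, m k := by omega
  rw [hSm]
  have h1 : (1 : ℝ) ^ (∑ k, m k) = 1 := one_pow _
  have h0 : (0 : ℝ) ^ (∑ k, m k) = 0 := zero_pow (by omega)
  rw [h1, h0]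
  have hScast : (∑ k, (m k : ℝ)) = ((∑ k, m k : ℕ) : ℝ) := by push_cast; rfl
  have hSne : ((∑ k, m k : ℕ) : ℝ) ≠ 0 := Nat.cast_ne_zero.2 (by omega)
  have hPsplit : ∏ k, (xbar k - x' k) ^ m k
      = (xbar i - x' i) ^ m i * ∏ k ∈ Finset.univ.erase i, (xbar k - x' k) ^ m k :=
    (Finset.mul_prod_erase _ _ (Finset.mem_univ i)).symm
  have hpow : (xbar i - x' i) ^ m i = (xbar i - x' i) ^ (m i - 1) * (xbar i - x' i) := by
    rw [← pow_succ]; congr 1; omega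
  rw [hPsplit, hpow, hScast]
  field_simp
  rw [Nat.cast_sub hS1, Nat.cast_one]
  ring

end IGcomp

/-- **Agreement with IG on monomials**: a baseline attribution method on real analytic
functions satisfying completeness, dummy, linearity, and symmetric monotonicity agrees
with Integrated Gradients on all monomials `[x − x']^m`; the `i`-th component equals
`(m_i/‖m‖₁)·[x̄ − x']^m` when `m ≠ 0`, and `0` when `m = 0`. -/
theorem agrees_with_IG_on_monomials {n : ℕ} (a b : Fin n → ℝ) (A : BAM n)
    (hcomp : Completeness a b A) (hdummy : Dummy a b A) (hlin : Linearity a b A)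
    (hsm : SymmetricMonotonicity a b A) :
    ∀ xbar ∈ Set.uIcc a b, ∀ x' ∈ Set.uIcc a b, ∀ m : Fin n → ℕ,
      A xbar x' (monomial x' m) = IG xbar x' (monomial x' m) ∧
      (m ≠ 0 → ∀ i, A xbar x' (monomial x' m) i
        = ((m i : ℝ) / ∑ k, (m k : ℝ)) * ∏ k, (xbar k - x' k) ^ m k) ∧
      (m = 0 → ∀ i, A xbar x' (monomial x' m) i = 0) := by
  intro xbar hxbar x' hx' m
  by_cases hm : m = 0
  · subst hm
    have hA : ∀ i, A xbar x' (monomial x' 0) i = 0 := fun i =>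
      A_exp_zero hdummy hxbar hx' 0 i rfl
    refine ⟨?_, fun h => absurd rfl h, fun _ => hA⟩
    funext i
    rw [hA i, IG_monomial_zero xbar x' 0 i rfl]
  · have hA : ∀ i, A xbar x' (monomial x' m) i
        = ((m i : ℝ) / ∑ k, (m k : ℝ)) * ∏ k, (xbar k - x' k) ^ m k := by
      by_cases hgood : ∀ k, 1 ≤ m k → xbar k ≠ x' k
      · intro i
        by_cases hmi : m i = 0
        · rw [A_exp_zero hdummy hxbar hx' m i hmi, hmi]; simp
        · exact A_main_pos hcomp hdummy hlin hsm hxbar hx' _ m i rfl (by omega) hgood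
      · push_neg at hgood
        obtain ⟨k0, hk01, hk0d⟩ := hgood
        have hP : ∏ k, (xbar k - x' k) ^ m k = 0 := by
          refine Finset.prod_eq_zero (Finset.mem_univ k0) ?_
          rw [sub_eq_zero.2 hk0d]
          exact zero_pow (by omega)
        intro i
        rw [hP, mul_zero]
        by_cases hmi : m i = 0
        · exact A_exp_zero hdummy hxbar hx' m i hmi
        · by_cases hdi : xbar i = x' i
          · exact (hsm xbar hxbar x' hx' _ _ (monomial_analytic x' m _)
              (monomial_analytic x' m _)).2 i hdi
          · have hk0i : k0 ≠ i := fun h => hdi (h ▸ hk0d)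
            apply A_zero_pderiv hdummy hsm hxbar hx' m i hdi
            intro x hx
            rw [pderiv_monomial]
            have hzero : ∏ k ∈ Finset.univ.erase i, (x k - x' k) ^ m k = 0 := by
              refine Finset.prod_eq_zero (Finset.mem_erase.2 ⟨hk0i, Finset.mem_univ _⟩) ?_
              rw [mem_box_coord hx hk0d, sub_self]
              exact zero_pow (by omega)
            rw [hzero, mul_zero]
    refine ⟨?_, fun _ => hA, fun h => absurd h hm⟩
    funext i
    rw [hA i]
    by_cases hmi : m i = 0
    · rw [IG_monomial_zero xbar x' m i hmi, hmi]; simp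
    · rw [IG_monomial_pos xbar x' m i (by omega)]
end

section
/- Let F ∈ F²(a,b), let U be the full-measure open set of the softplus-approximation topology theorem (on which F is locally equal to a real analytic function, ∇F exists, and ∇F_α → ∇F pointwise), let x̄, x' ∈ [a,b], and let γ(t) = x' + t(x̄ − x'). If λ({t ∈ [0,1] : γ(t) ∈ U}) = 1, then lim_{α→∞} IG(x̄, x', F_α) = IG(x̄, x', F). -/
open MeasureTheory Filter

/-- A feed-forward neural network architecture (composition of layers, each followed
by componentwise identity or ReLU). -/
inductive NN : ℕ → ℕ → Type where
  | input (k : ℕ) : NN k k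
  | layer {k l r : ℕ} (prev : NN k l) (F : (Fin l → ℝ) → (Fin r → ℝ)) (s : Fin r → Bool) :
      NN k r

/-- Evaluation of a network. -/
noncomputable def NN.eval : {k r : ℕ} → NN k r → (Fin k → ℝ) → Fin r → ℝ
  | _, _, .input _, x => x
  | _, _, .layer prev F s, x => fun i =>
      if s i then max (F (NN.eval prev x) i) 0 else F (NN.eval prev x) i

/-- The softplus approximation of the network: every ReLU is replaced with
`s_α(z) = ln(1 + exp(αz))/α`. -/
noncomputable def NN.evalSoft (α : ℝ) : {k r : ℕ} → NN k r → (Fin k → ℝ) → Fin r → ℝ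
  | _, _, .input _, x => x
  | _, _, .layer prev F s, x => fun i =>
      if s i then Real.log (1 + Real.exp (α * F (NN.evalSoft α prev x) i)) / α
      else F (NN.evalSoft α prev x) i

/-- All layer functions of the network are real analytic. -/
def NN.IsAnalytic : {k r : ℕ} → NN k r → Prop
  | _, _, .input _ => True
  | _, _, .layer prev F _ =>
      prev.IsAnalytic ∧ ∀ i, AnalyticOnNhd ℝ (fun x => F x i) Set.univ

open MeasureTheory Filter

lemma contDiff_softplus (α : ℝ) :
    ContDiff ℝ 2 (fun z : ℝ => Real.log (1 + Real.exp (α * z)) / α) := by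
  have h1 : ContDiff ℝ 2 (fun z : ℝ => 1 + Real.exp (α * z)) :=
    contDiff_const.add (Real.contDiff_exp.comp (contDiff_const.mul contDiff_id))
  exact (h1.log (fun z => by positivity)).div_const α

lemma softplus_hasDerivAt {α : ℝ} (hα : α ≠ 0) (z : ℝ) :
    HasDerivAt (fun z : ℝ => Real.log (1 + Real.exp (α * z)) / α)
      (Real.exp (α * z) / (1 + Real.exp (α * z))) z := by
  have hpos : (0:ℝ) < 1 + Real.exp (α * z) := by positivity
  have h1 : HasDerivAt (fun z : ℝ => α * z) α z := by
    simpa using (hasDerivAt_id z).const_mul α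
  have h2 : HasDerivAt (fun z : ℝ => Real.exp (α * z)) (Real.exp (α * z) * α) z :=
    (Real.hasDerivAt_exp (α * z)).comp z h1
  have h3 : HasDerivAt (fun z : ℝ => 1 + Real.exp (α * z)) (Real.exp (α * z) * α) z :=
    h2.const_add 1
  have h4 := ((Real.hasDerivAt_log hpos.ne').comp z h3).div_const α
  refine h4.congr_deriv ?_
  rw [mul_div_assoc, mul_div_cancel_right₀ _ hα]
  ring

lemma softplus_deriv_bound {α : ℝ} (z : ℝ) :
    |Real.exp (α * z) / (1 + Real.exp (α * z))| ≤ 1 := by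
  have hpos : (0:ℝ) < 1 + Real.exp (α * z) := by positivity
  rw [abs_of_nonneg (by positivity)]
  rw [div_le_one hpos]
  linarith

lemma softplus_val_bound {α : ℝ} (hα : 1 ≤ α) (z : ℝ) :
    |Real.log (1 + Real.exp (α * z)) / α| ≤ |z| + Real.log 2 := by
  have hα0 : (0:ℝ) < α := lt_of_lt_of_le one_pos hα
  have hpos : (0:ℝ) < 1 + Real.exp (α * z) := by positivity
  have hlog2 : (0:ℝ) ≤ Real.log 2 := Real.log_nonneg one_le_two
  have h1 : 0 ≤ Real.log (1 + Real.exp (α * z)) :=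
    Real.log_nonneg (by linarith [Real.exp_pos (α*z)])
  have h2 : Real.log (1 + Real.exp (α * z)) ≤ Real.log 2 + α * |z| := by
    have e1 : Real.exp (α*z) ≤ Real.exp |α*z| := Real.exp_le_exp.2 (le_abs_self _)
    have e2 : (1:ℝ) ≤ Real.exp |α*z| := Real.one_le_exp (abs_nonneg _)
    calc Real.log (1 + Real.exp (α * z)) ≤ Real.log (2 * Real.exp |α * z|) := by
          apply Real.log_le_log hpos
          linarith
      _ = Real.log 2 + |α * z| := by
          rw [Real.log_mul two_ne_zero (Real.exp_ne_zero _), Real.log_exp]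
      _ = Real.log 2 + α * |z| := by rw [abs_mul, abs_of_pos hα0]
  rw [abs_div, abs_of_nonneg h1, abs_of_pos hα0, div_le_iff₀ hα0]
  have : |z| + Real.log 2 ≤ (|z| + Real.log 2) * α := by
    nlinarith [abs_nonneg z]
  nlinarith [abs_nonneg z]

lemma NN.contDiff_evalSoft {k r : ℕ} (net : NN k r) (α : ℝ) :
    net.IsAnalytic → ContDiff ℝ 2 (NN.evalSoft α net) := by
  induction net with
  | input =>
      intro _
      have he : NN.evalSoft α (NN.input k) = id := by funext x; simp [NN.evalSoft]
      rw [he]; exact contDiff_id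
  | @layer l' r' prev Fl s ih =>
      intro hA
      simp only [NN.IsAnalytic] at hA
      have hprev := ih hA.1
      apply contDiff_pi.mpr
      intro i
      have hFi : ContDiff ℝ 2 (fun v => Fl v i) := (hA.2 i).contDiff
      by_cases hsi : s i
      · have he : (fun x => NN.evalSoft α (prev.layer Fl s) x i)
            = fun x => Real.log (1 + Real.exp (α * Fl (NN.evalSoft α prev x) i)) / α := by
          funext x; simp [NN.evalSoft, hsi]
        rw [he]
        exact (contDiff_softplus α).comp (hFi.comp hprev)
      · have he : (fun x => NN.evalSoft α (prev.layer Fl s) x i)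
            = fun x => Fl (NN.evalSoft α prev x) i := by
          funext x; simp [NN.evalSoft, hsi]
        rw [he]
        exact hFi.comp hprev

lemma NN.evalSoft_bound {k r : ℕ} (net : NN k r) :
    ∀ (K : Set (Fin k → ℝ)), IsCompact K → net.IsAnalytic →
    ∃ C : ℝ, 0 ≤ C ∧ ∀ α : ℝ, 1 ≤ α → ∀ x ∈ K, ‖NN.evalSoft α net x‖ ≤ C := by
  induction net with
  | input =>
      intro K hK _
      obtain ⟨C, hC⟩ := hK.exists_bound_of_continuousOn continuousOn_id
      refine ⟨max C 0, le_max_right _ _, fun α hα x hx => ?_⟩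
      have he : NN.evalSoft α (NN.input k) x = x := by simp [NN.evalSoft]
      rw [he]; exact le_max_of_le_left (hC x hx)
  | @layer l' r' prev Fl s ih =>
      intro K hK hA
      simp only [NN.IsAnalytic] at hA
      obtain ⟨C₀, hC₀0, hC₀⟩ := ih K hK hA.1
      have hBcomp : IsCompact (Metric.closedBall (0 : Fin l' → ℝ) C₀) :=
        isCompact_closedBall _ _
      have hFc : Continuous Fl := continuous_pi fun i =>
        continuousOn_univ.mp ((hA.2 i).continuousOn)
      obtain ⟨M, hM⟩ := hBcomp.exists_bound_of_continuousOn hFc.continuousOn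
      have hM0 : 0 ≤ M :=
        le_trans (norm_nonneg _) (hM 0 (Metric.mem_closedBall_self hC₀0))
      have hlog2 : (0:ℝ) ≤ Real.log 2 := Real.log_nonneg one_le_two
      refine ⟨M + Real.log 2, by positivity, fun α hα x hx => ?_⟩
      have hgx : NN.evalSoft α prev x ∈ Metric.closedBall (0 : Fin l' → ℝ) C₀ :=
        mem_closedBall_zero_iff.mpr (hC₀ α hα x hx)
      have hFb : ∀ i, |Fl (NN.evalSoft α prev x) i| ≤ M := fun i => by
        have := norm_le_pi_norm (Fl (NN.evalSoft α prev x)) i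
        simpa [Real.norm_eq_abs] using this.trans (hM _ hgx)
      apply (pi_norm_le_iff_of_nonneg (by positivity)).mpr
      intro i
      rw [Real.norm_eq_abs]
      by_cases hsi : s i
      · have he : NN.evalSoft α (prev.layer Fl s) x i
            = Real.log (1 + Real.exp (α * Fl (NN.evalSoft α prev x) i)) / α := by
          simp [NN.evalSoft, hsi]
        rw [he]
        calc |Real.log (1 + Real.exp (α * Fl (NN.evalSoft α prev x) i)) / α|
            ≤ |Fl (NN.evalSoft α prev x) i| + Real.log 2 := softplus_val_bound hα _
          _ ≤ M + Real.log 2 := by linarith [hFb i]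
      · have he : NN.evalSoft α (prev.layer Fl s) x i
            = Fl (NN.evalSoft α prev x) i := by simp [NN.evalSoft, hsi]
        rw [he]
        linarith [hFb i]

lemma NN.fderiv_evalSoft_bound {k r : ℕ} (net : NN k r) :
    ∀ (K : Set (Fin k → ℝ)), IsCompact K → net.IsAnalytic →
    ∃ C : ℝ, 0 ≤ C ∧ ∀ α : ℝ, 1 ≤ α → ∀ x ∈ K,
      ‖fderiv ℝ (NN.evalSoft α net) x‖ ≤ C := by
  induction net with
  | input =>
      intro K hK _
      refine ⟨1, zero_le_one, fun α hα x hx => ?_⟩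
      have he : NN.evalSoft α (NN.input k) = id := by
        funext x; simp [NN.evalSoft]
      rw [he, fderiv_id]
      exact ContinuousLinearMap.norm_id_le
  | @layer l' r' prev Fl s ih =>
      intro K hK hA
      simp only [NN.IsAnalytic] at hA
      obtain ⟨C₀, hC₀0, hC₀⟩ := NN.evalSoft_bound prev K hK hA.1
      obtain ⟨C₁, hC₁0, hC₁⟩ := ih K hK hA.1
      have hFl2 : ContDiff ℝ 2 Fl := contDiff_pi.mpr (fun i => (hA.2 i).contDiff)
      have hcont : Continuous (fun v : Fin l' → ℝ => fderiv ℝ Fl v) :=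
        hFl2.continuous_fderiv (by norm_num)
      obtain ⟨M, hM⟩ := (isCompact_closedBall (0 : Fin l' → ℝ) C₀).exists_bound_of_continuousOn
        hcont.continuousOn
      have hM0 : 0 ≤ M :=
        le_trans (norm_nonneg _) (hM 0 (Metric.mem_closedBall_self hC₀0))
      refine ⟨M * C₁, by positivity, fun α hα x hx => ?_⟩
      have hα0 : α ≠ 0 := by positivity
      have hprev2 : ContDiff ℝ 2 (NN.evalSoft α prev) := NN.contDiff_evalSoft prev α hA.1
      have hgd : HasFDerivAt (NN.evalSoft α prev) (fderiv ℝ (NN.evalSoft α prev) x) x :=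
        (hprev2.differentiable (by norm_num) x).hasFDerivAt
      have hgB : NN.evalSoft α prev x ∈ Metric.closedBall (0 : Fin l' → ℝ) C₀ :=
        mem_closedBall_zero_iff.mpr (hC₀ α hα x hx)
      have hDg : ‖fderiv ℝ (NN.evalSoft α prev) x‖ ≤ C₁ := hC₁ α hα x hx
      have hFd : HasFDerivAt Fl (fderiv ℝ Fl (NN.evalSoft α prev x)) (NN.evalSoft α prev x) :=
        (hFl2.differentiable (by norm_num) _).hasFDerivAt
      have key : ∀ i : Fin r', ∃ L : (Fin k → ℝ) →L[ℝ] ℝ,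
          HasFDerivAt (fun y => NN.evalSoft α (prev.layer Fl s) y i) L x ∧ ‖L‖ ≤ M * C₁ := by
        intro i
        have hq : HasFDerivAt (fun y => Fl (NN.evalSoft α prev y) i)
            ((ContinuousLinearMap.proj i ∘L fderiv ℝ Fl (NN.evalSoft α prev x))
              ∘L fderiv ℝ (NN.evalSoft α prev) x) x := by
          have hproj : HasFDerivAt (fun v : Fin r' → ℝ => v i)
              (ContinuousLinearMap.proj (R := ℝ) (φ := fun _ : Fin r' => ℝ) i)
              (Fl (NN.evalSoft α prev x)) :=
            hasFDerivAt_apply (𝕜 := ℝ) i (Fl (NN.evalSoft α prev x))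
          have h1 : HasFDerivAt (fun v : Fin l' → ℝ => Fl v i)
              (ContinuousLinearMap.proj i ∘L fderiv ℝ Fl (NN.evalSoft α prev x))
              (NN.evalSoft α prev x) := hproj.comp _ hFd
          exact h1.comp x hgd
        have hqn : ‖(ContinuousLinearMap.proj (R := ℝ) (φ := fun _ : Fin r' => ℝ) i
              ∘L fderiv ℝ Fl (NN.evalSoft α prev x))
              ∘L fderiv ℝ (NN.evalSoft α prev) x‖ ≤ M * C₁ := by
          calc ‖(ContinuousLinearMap.proj (R := ℝ) (φ := fun _ : Fin r' => ℝ) i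
              ∘L fderiv ℝ Fl (NN.evalSoft α prev x))
              ∘L fderiv ℝ (NN.evalSoft α prev) x‖
              ≤ ‖ContinuousLinearMap.proj (R := ℝ) (φ := fun _ : Fin r' => ℝ) i
                  ∘L fderiv ℝ Fl (NN.evalSoft α prev x)‖
                * ‖fderiv ℝ (NN.evalSoft α prev) x‖ := ContinuousLinearMap.opNorm_comp_le _ _
            _ ≤ M * C₁ := by
                apply mul_le_mul _ hDg (norm_nonneg _) hM0
                apply ContinuousLinearMap.opNorm_le_bound _ hM0
                intro v
                calc ‖(ContinuousLinearMap.proj (R := ℝ) (φ := fun _ : Fin r' => ℝ) i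
                      ∘L fderiv ℝ Fl (NN.evalSoft α prev x)) v‖
                    = ‖fderiv ℝ Fl (NN.evalSoft α prev x) v i‖ := rfl
                  _ ≤ ‖fderiv ℝ Fl (NN.evalSoft α prev x) v‖ := norm_le_pi_norm _ i
                  _ ≤ ‖fderiv ℝ Fl (NN.evalSoft α prev x)‖ * ‖v‖ :=
                      ContinuousLinearMap.le_opNorm _ v
                  _ ≤ M * ‖v‖ := mul_le_mul_of_nonneg_right (hM _ hgB) (norm_nonneg v)
        by_cases hsi : s i
        · have hder := (softplus_hasDerivAt hα0
            (Fl (NN.evalSoft α prev x) i)).comp_hasFDerivAt x hq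
          refine ⟨(Real.exp (α * Fl (NN.evalSoft α prev x) i)
              / (1 + Real.exp (α * Fl (NN.evalSoft α prev x) i))) •
              (((ContinuousLinearMap.proj i).comp (fderiv ℝ Fl (NN.evalSoft α prev x))).comp
                (fderiv ℝ (NN.evalSoft α prev) x)), ?_, ?_⟩
          · have he : (fun y => NN.evalSoft α (prev.layer Fl s) y i)
                = (fun z : ℝ => Real.log (1 + Real.exp (α * z)) / α)
                  ∘ (fun y => Fl (NN.evalSoft α prev y) i) := by
              funext y; simp [NN.evalSoft, hsi, Function.comp]
            rw [he]; exact hder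
          · refine (norm_smul_le (Real.exp (α * Fl (NN.evalSoft α prev x) i)
              / (1 + Real.exp (α * Fl (NN.evalSoft α prev x) i)))
              ((((ContinuousLinearMap.proj i).comp (fderiv ℝ Fl (NN.evalSoft α prev x))).comp
                (fderiv ℝ (NN.evalSoft α prev) x)))).trans ?_
            have h1 : ‖Real.exp (α * Fl (NN.evalSoft α prev x) i)
                / (1 + Real.exp (α * Fl (NN.evalSoft α prev x) i))‖ ≤ 1 := by
              rw [Real.norm_eq_abs]; exact softplus_deriv_bound _
            simpa using mul_le_mul h1 hqn (norm_nonneg _) zero_le_one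
        · refine ⟨_, ?_, hqn⟩
          have he : (fun y => NN.evalSoft α (prev.layer Fl s) y i)
              = fun y => Fl (NN.evalSoft α prev y) i := by
            funext y; simp [NN.evalSoft, hsi]
          rw [he]; exact hq
      choose D hD hDb using key
      have hfull : HasFDerivAt (NN.evalSoft α (prev.layer Fl s))
          (ContinuousLinearMap.pi D) x := by
        apply hasFDerivAt_pi''
        intro i
        rw [ContinuousLinearMap.proj_pi]
        exact hD i
      rw [hfull.fderiv]
      apply ContinuousLinearMap.opNorm_le_bound _ (by positivity)
      intro v
      rw [show (M * C₁) * ‖v‖ = (M * C₁ * ‖v‖) by ring]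
      apply (pi_norm_le_iff_of_nonneg (by positivity)).mpr
      intro i
      calc ‖(ContinuousLinearMap.pi D) v i‖ = ‖D i v‖ := rfl
        _ ≤ ‖D i‖ * ‖v‖ := (D i).le_opNorm v
        _ ≤ M * C₁ * ‖v‖ := mul_le_mul_of_nonneg_right (hDb i) (norm_nonneg v)

lemma pderiv'_eq {n : ℕ} {F : (Fin n → ℝ) → ℝ} {i : Fin n} {x : Fin n → ℝ}
    (h : DifferentiableAt ℝ F x) :
    pderiv' F i x = fderiv ℝ F x (Pi.single i 1) := by
  have hu : HasDerivAt (fun t : ℝ => Function.update x i t) (Pi.single i 1) (x i) := by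
    have he : (fun t : ℝ => Function.update x i t)
        = fun t => x + (t - x i) • (Pi.single i (1:ℝ) : Fin n → ℝ) := by
      funext t
      funext j
      by_cases hj : j = i
      · subst hj; simp [Function.update_apply]
      · simp [Function.update_apply, hj, Pi.single_apply]
    rw [he]
    simpa using (((hasDerivAt_id (x i)).sub_const (x i)).smul_const
      ((Pi.single i (1:ℝ) : Fin n → ℝ))).const_add x
  have hc : HasDerivAt (fun t => F (Function.update x i t))
      (fderiv ℝ F x (Pi.single i 1)) (x i) := by
    exact h.hasFDerivAt.comp_hasDerivAt_of_eq (x i) hu (by simp)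
  exact hc.deriv


/-- **Convergence of IG along softplus approximations**: let `F ∈ F²(a,b)`, let `U` be
the full-measure open set of the softplus-approximation topology theorem (on which `F`
is locally equal to a real analytic function, `∇F` exists, and `∇F_α → ∇F` pointwise),
and let `γ(t) = x' + t(x̄ − x')`. If `λ({t ∈ [0,1] : γ(t) ∈ U}) = 1` then
`IG(x̄, x', F_α) → IG(x̄, x', F)` as `α → ∞`. -/
theorem IG_softplus_convergence {n : ℕ} (a b : Fin n → ℝ)
    (net : NN n 1) (hnet : net.IsAnalytic)
    (F : (Fin n → ℝ) → ℝ) (hF : ∀ x, F x = net.eval x 0)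
    (U : Set (Fin n → ℝ)) (hUsub : U ⊆ Set.uIcc a b) (hUopen : IsOpen U)
    (hUvol : volume U = volume (Set.uIcc a b))
    (hU : ∀ x ∈ U,
      (∃ B : Set (Fin n → ℝ), IsOpen B ∧ x ∈ B ∧
        ∃ H : (Fin n → ℝ) → ℝ, AnalyticOnNhd ℝ H (Set.uIcc a b) ∧
          Set.EqOn F H (B ∩ Set.uIcc a b)) ∧
      DifferentiableAt ℝ F x ∧
      Tendsto (fun α : ℝ => fderiv ℝ (fun y => net.evalSoft α y 0) x) atTop
        (nhds (fderiv ℝ F x)))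
    (xbar x' : Fin n → ℝ) (hxbar : xbar ∈ Set.uIcc a b) (hx' : x' ∈ Set.uIcc a b)
    (hγ : volume {t ∈ Set.Icc (0:ℝ) 1 | x' + t • (xbar - x') ∈ U} = 1) :
    Tendsto (fun α : ℝ => IG xbar x' (fun y => net.evalSoft α y 0)) atTop
      (nhds (IG xbar x' F)) := by
  have hγc : Continuous (fun t : ℝ => x' + t • (xbar - x')) := by
    exact continuous_const.add (continuous_id.smul continuous_const)
  have hKc : IsCompact ((fun t : ℝ => x' + t • (xbar - x')) '' Set.Icc (0:ℝ) 1) :=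
    isCompact_Icc.image hγc
  obtain ⟨C, hC0, hC⟩ := NN.fderiv_evalSoft_bound net _ hKc hnet
  have hsm : ∀ α : ℝ, ContDiff ℝ 2 (NN.evalSoft α net) :=
    fun α => NN.contDiff_evalSoft net α hnet
  have hsm0 : ∀ α : ℝ, ContDiff ℝ 2 (fun y => NN.evalSoft α net y 0) :=
    fun α => contDiff_pi.mp (hsm α) 0
  -- a.e. membership in U along the path
  have hmemS : ∀ᵐ t : ℝ, t ∈ Set.uIoc (0:ℝ) 1 → x' + t • (xbar - x') ∈ U := by
    have hSm : MeasurableSet {t : ℝ | t ∈ Set.Icc (0:ℝ) 1 ∧ x' + t • (xbar - x') ∈ U} := by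
      have he : {t : ℝ | t ∈ Set.Icc (0:ℝ) 1 ∧ x' + t • (xbar - x') ∈ U}
          = Set.Icc (0:ℝ) 1 ∩ (fun t : ℝ => x' + t • (xbar - x')) ⁻¹' U := rfl
      rw [he]
      exact measurableSet_Icc.inter ((hUopen.preimage hγc).measurableSet)
    have hsub : {t : ℝ | t ∈ Set.Icc (0:ℝ) 1 ∧ x' + t • (xbar - x') ∈ U}
        ⊆ Set.Icc (0:ℝ) 1 := fun t ht => ht.1
    have hdiff : volume (Set.Icc (0:ℝ) 1
        \ {t : ℝ | t ∈ Set.Icc (0:ℝ) 1 ∧ x' + t • (xbar - x') ∈ U}) = 0 := by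
      rw [measure_diff hsub hSm.nullMeasurableSet (by rw [hγ]; exact ENNReal.one_ne_top)]
      rw [hγ, Real.volume_Icc]
      norm_num
    have hae0 : ∀ᵐ t : ℝ, t ∉ (Set.Icc (0:ℝ) 1
        \ {t : ℝ | t ∈ Set.Icc (0:ℝ) 1 ∧ x' + t • (xbar - x') ∈ U}) := by
      rw [ae_iff]
      refine measure_mono_null ?_ hdiff
      intro t ht
      exact not_not.mp ht
    refine hae0.mono fun t ht hti => ?_
    have htIcc : t ∈ Set.Icc (0:ℝ) 1 :=
      Set.Ioc_subset_Icc_self (by rwa [Set.uIoc_of_le zero_le_one] at hti)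
    by_contra h
    exact ht ⟨htIcc, fun hS => h hS.2⟩
  rw [tendsto_pi_nhds]
  intro i
  have hdiffall : ∀ (α : ℝ) (y : Fin n → ℝ),
      DifferentiableAt ℝ (fun y => NN.evalSoft α net y 0) y :=
    fun α y => ((hsm0 α).differentiable (by norm_num)).differentiableAt
  have hInt : Tendsto
      (fun α : ℝ => ∫ t in (0:ℝ)..1,
        pderiv' (fun y => NN.evalSoft α net y 0) i (x' + t • (xbar - x')))
      atTop (nhds (∫ t in (0:ℝ)..1, pderiv' F i (x' + t • (xbar - x')))) := by
    have hrw : ∀ α : ℝ,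
        (∫ t in (0:ℝ)..1, pderiv' (fun y => NN.evalSoft α net y 0) i (x' + t • (xbar - x')))
        = ∫ t in (0:ℝ)..1,
            fderiv ℝ (fun y => NN.evalSoft α net y 0) (x' + t • (xbar - x')) (Pi.single i 1) := by
      intro α
      apply intervalIntegral.integral_congr
      intro t _
      exact pderiv'_eq (hdiffall α _)
    simp only [hrw]
    apply intervalIntegral.tendsto_integral_filter_of_dominated_convergence (bound := fun _ => C)
    · apply Eventually.of_forall
      intro α
      have hc1 : Continuous (fun y => fderiv ℝ (fun y => NN.evalSoft α net y 0) y) :=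
        (hsm0 α).continuous_fderiv (by norm_num)
      exact (((hc1.comp hγc).clm_apply continuous_const)).aestronglyMeasurable
    · filter_upwards [eventually_ge_atTop (1:ℝ)] with α hα
      apply Eventually.of_forall
      intro t hti
      have htIcc : t ∈ Set.Icc (0:ℝ) 1 :=
        Set.Ioc_subset_Icc_self (by rwa [Set.uIoc_of_le zero_le_one] at hti)
      have hmem : x' + t • (xbar - x')
          ∈ (fun t : ℝ => x' + t • (xbar - x')) '' Set.Icc (0:ℝ) 1 := ⟨t, htIcc, rfl⟩
      have hfull := ((hsm α).differentiable (by norm_num) (x' + t • (xbar - x'))).hasFDerivAt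
      have hcomp := hasFDerivAt_pi'.1 hfull 0
      rw [hcomp.fderiv]
      calc ‖(ContinuousLinearMap.proj (R := ℝ) (φ := fun _ : Fin 1 => ℝ) 0
            ∘L fderiv ℝ (NN.evalSoft α net) (x' + t • (xbar - x'))) (Pi.single i 1)‖
          = ‖fderiv ℝ (NN.evalSoft α net) (x' + t • (xbar - x')) (Pi.single i 1) 0‖ := rfl
        _ ≤ ‖fderiv ℝ (NN.evalSoft α net) (x' + t • (xbar - x')) (Pi.single i 1)‖ :=
            norm_le_pi_norm _ 0
        _ ≤ ‖fderiv ℝ (NN.evalSoft α net) (x' + t • (xbar - x'))‖ * ‖(Pi.single i 1 : Fin n → ℝ)‖ :=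
            ContinuousLinearMap.le_opNorm _ _
        _ ≤ C * 1 := by
            apply mul_le_mul (hC α hα _ hmem) _ (norm_nonneg _) hC0
            rw [Pi.norm_single, norm_one]
        _ = C := mul_one C
    · exact intervalIntegrable_const
    · refine hmemS.mono fun t ht hti => ?_
      have hUt := hU _ (ht hti)
      have hconv := hUt.2.2
      have hlim := ((ContinuousLinearMap.apply ℝ ℝ
        (Pi.single i (1:ℝ))).continuous.tendsto _).comp hconv
      have heq : pderiv' F i (x' + t • (xbar - x'))
          = fderiv ℝ F (x' + t • (xbar - x')) (Pi.single i 1) := pderiv'_eq hUt.2.1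
      rw [heq]
      exact hlim
  simpa only [IG] using hInt.const_mul (xbar i - x' i)
end
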